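/- Let a ≠ 0 and b > 0 be real constants, and let v : (0, t₀) → (0, ∞) satisfy t·v(t) → 0 as t → 0⁺ and (t v(t))^{3/2} exp(−a²/(2 t v(t))) / (b t) → 1 as t → 0⁺. Then lim_{t→0⁺} 2 t v(t) ln(1/t) = a², i.e., v(t) ~ a² / (2 t ln(1/t)) as t → 0⁺. -/

import Mathlib

open Filter Real Set

/-- Asymptotic inversion giving the first-order implied volatility: if `tv(t) → 0` and
`(tv(t))^{3/2} e^{−a²/(2tv(t))}/(bt) → 1` as `t → 0⁺`, then
`2 t v(t) ln(1/t) → a²`, i.e. `v(t) ∼ a²/(2t ln(1/t))`. -/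
theorem stmt18 (a b t₀ : ℝ) (ha : a ≠ 0) (hb : 0 < b) (ht₀ : 0 < t₀)
    (v : ℝ → ℝ) (hv : ∀ t ∈ Set.Ioo 0 t₀, 0 < v t)
    (h1 : Filter.Tendsto (fun t => t * v t) (nhdsWithin 0 (Set.Ioi 0)) (nhds 0))
    (h2 : Filter.Tendsto
      (fun t => (t * v t) ^ ((3 : ℝ) / 2) * Real.exp (-a ^ 2 / (2 * (t * v t))) / (b * t))
      (nhdsWithin 0 (Set.Ioi 0)) (nhds 1)) :
    Filter.Tendsto (fun t => 2 * t * v t * Real.log (1 / t))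
      (nhdsWithin 0 (Set.Ioi 0)) (nhds (a ^ 2)) := by
  set L := nhdsWithin (0:ℝ) (Set.Ioi 0) with hL
  have hmem : ∀ᶠ t in L, t ∈ Set.Ioo 0 t₀ :=
    Ioo_mem_nhdsGT_of_mem ⟨le_refl 0, ht₀⟩
  have hupos : ∀ᶠ t in L, 0 < t * v t :=
    hmem.mono fun t ht => mul_pos ht.1 (hv t ht)
  have hu0 : Tendsto (fun t => t * v t) L (nhdsWithin 0 (Set.Ioi 0)) :=
    tendsto_nhdsWithin_of_tendsto_nhds_of_eventually_within _ h1 hupos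
  -- x log x → 0
  have hxlogx : Tendsto (fun x : ℝ => x * Real.log x) (nhdsWithin 0 (Set.Ioi 0)) (nhds 0) := by
    have h := (Real.continuous_mul_log.tendsto 0).mono_left (nhdsWithin_le_nhds (s := Set.Ioi 0))
    simpa using h
  have hulogu : Tendsto (fun t => (t * v t) * Real.log (t * v t)) L (nhds 0) := hxlogx.comp hu0
  -- log of h2 expression → 0
  have hlog : Tendsto (fun t =>
      Real.log ((t * v t) ^ ((3 : ℝ) / 2) * Real.exp (-a ^ 2 / (2 * (t * v t))) / (b * t)))
      L (nhds 0) := by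
    have hc : ContinuousAt Real.log 1 := Real.continuousAt_log one_ne_zero
    have := hc.tendsto.comp h2
    simpa [Function.comp_def] using this
  set F : ℝ → ℝ := fun t => (3 / 2) * Real.log (t * v t) - a ^ 2 / (2 * (t * v t))
      - Real.log (b * t) with hF
  have hFlog : Tendsto F L (nhds 0) := by
    refine hlog.congr' ?_
    filter_upwards [hmem, hupos] with t ht hu
    have hbt : (0:ℝ) < b * t := mul_pos hb ht.1
    rw [Real.log_div (by positivity) (ne_of_gt hbt), Real.log_mul (by positivity)
      (Real.exp_ne_zero _), Real.log_rpow hu, Real.log_exp, hF]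
    ring_nf
  have h2uF : Tendsto (fun t => 2 * (t * v t) * F t) L (nhds 0) := by
    have := (h1.const_mul 2).mul hFlog
    simpa using this
  have key : Tendsto (fun t =>
      a ^ 2 + 2 * (t * v t) * F t - 3 * ((t * v t) * Real.log (t * v t))
        + 2 * Real.log b * (t * v t)) L (nhds (a ^ 2)) := by
    have := ((((tendsto_const_nhds : Tendsto (fun _ : ℝ => a ^ 2) L (nhds (a ^ 2)))).add h2uF).sub (hulogu.const_mul 3)).add
      (h1.const_mul (2 * Real.log b))
    simpa using this
  refine key.congr' ?_
  filter_upwards [hmem, hupos] with t ht hu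
  have ht0 : (0:ℝ) < t := ht.1
  have hune : t * v t ≠ 0 := ne_of_gt hu
  simp only [hF]
  rw [Real.log_mul (ne_of_gt hb) (ne_of_gt ht0), Real.log_div one_ne_zero (ne_of_gt ht0),
    Real.log_one]
  have hvne : v t ≠ 0 := ne_of_gt (hv t ht)
  field_simp
  ring
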